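/- Let d ≥ 2 be even and let m > 0 be a real number such that m^d − c_{d−1}(m)·m < 0. Define u ∈ ℝ^{d+1} by u_k = c_{d−k}(m) · m^k + (−1)^{d+k−1} · c_{k−1}(m) · m^{d+1−k} for k = 0, …, d, where c_{−1}(m) = 0, and let a^{(i)} = e_{i+1} − e_{i−1} (indices modulo d+1). Then ⟨u, e_d⟩ < 0, and for every i ∈ {1, …, d} one has ⟨u, e_d + m·a^{(i)}⟩ ≤ 0, with equality if and only if i = d. -/

import Mathlib

/-- Shifted continuant numbers: `cseq m n = c_{n-1}(m)`, where `c_{-1} = 0`, `c_0 = 1`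
and `c_k = c_{k-1} + m^2 c_{k-2}` for `k ≥ 1`. -/
noncomputable def cseq (m : ℝ) : ℕ → ℝ
  | 0 => 0
  | 1 => 1
  | (n+2) => cseq m (n+1) + m ^ 2 * cseq m n

/-- `u_k = c_{d-k}(m)·m^k + (-1)^{d+k-1}·c_{k-1}(m)·m^{d+1-k}`, with `c_{-1} = 0`. -/
noncomputable def uval (d : ℕ) (m : ℝ) (k : ℕ) : ℝ :=
  cseq m (d - k + 1) * m ^ k + (-1 : ℝ) ^ (d + k - 1) * cseq m k * m ^ (d + 1 - k)

/-- The standard basis vector `e_i` of `ℝ^{d+1}`. -/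
def eb (d : ℕ) (i : Fin (d+1)) : Fin (d+1) → ℝ := fun j => if j = i then 1 else 0

/-- The vector `a^{(i)} = e_{i+1} - e_{i-1}` (indices modulo `d+1`). -/
def av (d : ℕ) (i : Fin (d+1)) : Fin (d+1) → ℝ := eb d (i + 1) - eb d (i - 1)

lemma cseq_rec (m : ℝ) (n : ℕ) : cseq m (n+2) = cseq m (n+1) + m^2 * cseq m n := rfl

lemma npow_even (k : ℕ) : ((-1:ℝ))^(2*k) = 1 := by rw [pow_mul]; norm_num

lemma npow_odd (k : ℕ) : ((-1:ℝ))^(2*k+1) = -1 := by rw [pow_succ, pow_mul]; norm_num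

lemma cseq_nonneg (m : ℝ) : ∀ n, 0 ≤ cseq m n
  | 0 => by simp [cseq]
  | 1 => by simp [cseq]
  | (n+2) => by
      have h1 := cseq_nonneg m (n+1)
      have h2 := cseq_nonneg m n
      rw [cseq]
      have : 0 ≤ m^2 * cseq m n := mul_nonneg (sq_nonneg m) h2
      linarith

lemma cseq_pos (m : ℝ) : ∀ n, 0 < cseq m (n+1)
  | 0 => by norm_num [cseq]
  | (n+1) => by
      have h1 := cseq_pos m n
      have h2 := cseq_nonneg m n
      rw [cseq]
      have : 0 ≤ m^2 * cseq m n := mul_nonneg (sq_nonneg m) h2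
      linarith

lemma cseq_add (m : ℝ) : ∀ a b, cseq m (a+b+1) = cseq m (a+1) * cseq m (b+1) + m^2 * cseq m a * cseq m b
  | 0, b => by simp [cseq]
  | 1, b => by
      rw [show 1+b+1 = b+2 from by omega, cseq]
      norm_num [cseq]
  | (a+2), b => by
      have h1 := cseq_add m (a+1) b
      have h0 := cseq_add m a b
      have e1 : a+2+b+1 = (a+b+1)+2 := by ring
      have e2 : a+1+b+1 = (a+b+1)+1 := by ring
      rw [e2] at h1
      rw [e1, cseq_rec, h1, h0, show a+2+1 = (a+1)+2 from by omega, cseq_rec m (a+1),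
        show a+1+1 = a+2 from by omega, cseq_rec m a]
      ring

lemma cseq_even_ge (m : ℝ) (hm : 0 < m) : ∀ k, m^(2*k) ≤ cseq m (2*k+1)
  | 0 => by simp [cseq]
  | (k+1) => by
      have ih := cseq_even_ge m hm k
      have hp := cseq_pos m (2*k+1)
      have e : 2*(k+1)+1 = (2*k+1)+2 := by ring
      rw [e, cseq]
      have h1 : m^(2*(k+1)) = m^2 * m^(2*k) := by rw [← pow_add]; ring_nf
      have h2 : m^2 * m^(2*k) ≤ m^2 * cseq m (2*k+1) :=
        mul_le_mul_of_nonneg_left ih (sq_nonneg m)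
      rw [show 2*k+1+1 = 2*k+2 from rfl]
      linarith [cseq_pos m (2*k+1)]

lemma uval_d (d : ℕ) (hd : 1 ≤ d) (m : ℝ) : uval d m d = m^d - cseq m d * m := by
  unfold uval
  rw [show d - d + 1 = 1 from by omega, show d + 1 - d = 1 from by omega,
      show d + d - 1 = 2*(d-1)+1 from by omega, npow_odd,
      show cseq m 1 = 1 from rfl]
  ring

lemma uval_pos_odd (m : ℝ) (hm : 0 < m) (d i : ℕ) (hde : Even d) (hod : Odd i)
    (h1 : 1 ≤ i) (h2 : i ≤ d - 1) (hd : 2 ≤ d) : 0 < uval d m i := by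
  obtain ⟨c, hc⟩ := hde
  obtain ⟨k, hk⟩ := hod
  unfold uval
  rw [show d + i - 1 = 2*(c+k) from by omega, npow_even, one_mul]
  have hA := cseq_pos m (d - i)
  have hB : 0 < cseq m i := by
    have := cseq_pos m (i-1); rwa [show i-1+1 = i from by omega] at this
  have p1 := pow_pos hm i
  have p2 := pow_pos hm (d+1-i)
  nlinarith [mul_pos hA p1, mul_pos hB p2]

lemma uval_lt_even (m : ℝ) (hm : 0 < m) (s t : ℕ) :
    uval (2*s+2*t+4) m (2*s+2*t+4) < uval (2*s+2*t+4) m (2*s+2) := by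
  rw [uval_d _ (by omega)]
  unfold uval
  rw [show 2*s+2*t+4 - (2*s+2) + 1 = 2*t+3 from by omega,
      show 2*s+2*t+4+1 - (2*s+2) = 2*t+3 from by omega,
      show 2*s+2*t+4 + (2*s+2) - 1 = 2*(2*s+t+2)+1 from by omega, npow_odd]
  have hadd := cseq_add m (2*t+2) (2*s+1)
  rw [show 2*t+2+(2*s+1)+1 = 2*s+2*t+4 from by omega, show 2*t+2+1 = 2*t+3 from by omega,
      show 2*s+1+1 = 2*s+2 from by omega] at hadd
  have hge := cseq_even_ge m hm (t+1)
  rw [show 2*(t+1)+1 = 2*t+3 from by omega, show 2*(t+1) = 2*t+2 from by omega] at hge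
  have hB := cseq_pos m (2*s+1)
  have hC := cseq_pos m (2*t+1)
  have hD := cseq_pos m (2*s)
  have key : (cseq m (2*t+3) * m^(2*s+2) + -1 * cseq m (2*s+2) * m^(2*t+3))
      - (m^(2*s+2*t+4) - cseq m (2*s+2*t+4) * m)
      = (cseq m (2*s+2)*m + m^(2*s+2)) * (cseq m (2*t+3) - m^(2*t+2))
        + m^3 * cseq m (2*t+2) * cseq m (2*s+1) := by
    rw [hadd]; ring
  have h1 : 0 ≤ (cseq m (2*s+2)*m + m^(2*s+2)) * (cseq m (2*t+3) - m^(2*t+2)) :=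
    mul_nonneg (by nlinarith [pow_pos hm (2*s+2)]) (sub_nonneg.mpr hge)
  have h2 : 0 < m^3 * cseq m (2*t+2) * cseq m (2*s+1) :=
    mul_pos (mul_pos (pow_pos hm 3) hC) hD
  linarith

lemma uval_lt (m : ℝ) (hm : 0 < m) (d : ℕ) (hde : Even d) (hd : 2 ≤ d)
    (hneg : m ^ d - cseq m d * m < 0) (i : ℕ) (h1 : 1 ≤ i) (h2 : i ≤ d - 1) :
    uval d m d < uval d m i := by
  rcases Nat.even_or_odd i with he | ho
  · have hde' := hde
    rw [Nat.even_iff] at hde' he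
    obtain ⟨s, t, hs, ht⟩ : ∃ s t, i = 2*s+2 ∧ d = 2*s+2*t+4 :=
      ⟨i/2-1, (d-i)/2-1, by omega, by omega⟩
    subst hs ht
    exact uval_lt_even m hm s t
  · calc uval d m d = m^d - cseq m d * m := uval_d d (by omega) m
      _ < 0 := hneg
      _ < uval d m i := uval_pos_odd m hm d i hde ho h1 h2 hd

lemma sum_pick (d : ℕ) (f : Fin (d+1) → ℝ) (t : Fin (d+1)) :
    ∑ j : Fin (d+1), f j * eb d t j = f t := by
  simp [eb, mul_ite]

lemma sum_combo (d : ℕ) (m : ℝ) (f : Fin (d+1) → ℝ) (t : Fin (d+1)) (i : Fin (d+1)) :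
    ∑ j : Fin (d+1), f j * (eb d t j + m * av d i j)
      = f t + m * (f (i+1) - f (i-1)) := by
  have h : ∀ j, f j * (eb d t j + m * av d i j)
      = f j * eb d t j + m * (f j * eb d (i+1) j) - m * (f j * eb d (i-1) j) := by
    intro j; simp only [av, Pi.sub_apply]; ring
  simp only [h]
  rw [Finset.sum_sub_distrib, Finset.sum_add_distrib, ← Finset.mul_sum, ← Finset.mul_sum,
    sum_pick, sum_pick, sum_pick]
  ring

/-- telescoping: m(u_{k+1} - u_{k-1}) = -u_k -/
lemma uval_tele (m : ℝ) (j r : ℕ) :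
    uval (j+r+2) m (j+1) + m * (uval (j+r+2) m (j+2) - uval (j+r+2) m j) = 0 := by
  unfold uval
  rw [show j+r+2 - (j+1) + 1 = r+2 from by omega, show j+r+2+1 - (j+1) = r+2 from by omega,
      show j+r+2 + (j+1) - 1 = 2*(j+1) + r from by omega,
      show j+r+2 - (j+2) + 1 = r+1 from by omega, show j+r+2+1 - (j+2) = r+1 from by omega,
      show j+r+2 + (j+2) - 1 = 2*(j+1) + (r+1) from by omega,
      show j+r+2 - j + 1 = r+3 from by omega, show j+r+2+1 - j = r+3 from by omega,
      show j+r+2 + j - 1 = 2*j + (r+1) from by omega]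
  have hp : ∀ s t : ℕ, ((-1:ℝ))^(2*t+s) = (-1)^s := by
    intro s t; rw [pow_add, pow_mul]; norm_num
  rw [hp r (j+1), hp (r+1) (j+1), hp (r+1) j,
      show r+3 = (r+1)+2 from by omega, cseq_rec m (r+1), show r+1+1 = r+2 from by omega,
      cseq_rec m j]
  have hq : ((-1:ℝ))^(r+1) = (-1)^r * (-1) := pow_succ (-1) r
  rw [hq]
  ring

/-- i = d case: u_d + m(u_0 - u_{d-1}) = 0 -/
lemma uval_last (m : ℝ) (e : ℕ) :
    uval (e+2) m (e+2) + m * (uval (e+2) m 0 - uval (e+2) m (e+1)) = 0 := by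
  unfold uval
  rw [show e+2 - (e+2) + 1 = 1 from by omega, show e+2+1 - (e+2) = 1 from by omega,
      show e+2 + (e+2) - 1 = 2*(e+1)+1 from by omega,
      show e+2 - 0 + 1 = e+3 from by omega, show e+2+1 - 0 = e+3 from by omega,
      show e+2 - (e+1) + 1 = 2 from by omega, show e+2+1 - (e+1) = 2 from by omega,
      show e+2 + (e+1) - 1 = 2*(e+1) from by omega,
      npow_odd, npow_even,
      show cseq m 1 = 1 from rfl, show cseq m 2 = 1 from by rw [cseq_rec m 0]; norm_num [cseq],
      show cseq m 0 = 0 from rfl,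
      show e+3 = (e+1)+2 from by omega, cseq_rec m (e+1), show e+1+1 = e+2 from by omega]
  ring

theorem stmt15 (d : ℕ) (hd : 2 ≤ d) (hde : Even d) (m : ℝ) (hm : 0 < m)
    (hneg : m ^ d - cseq m d * m < 0) :
    (∑ j : Fin (d+1), uval d m (j : ℕ) * eb d (Fin.last d) j) < 0 ∧
    ∀ i : Fin (d+1), i ≠ 0 →
      (∑ j : Fin (d+1), uval d m (j : ℕ) * (eb d (Fin.last d) j + m * av d i j)) ≤ 0 ∧
      ((∑ j : Fin (d+1), uval d m (j : ℕ) * (eb d (Fin.last d) j + m * av d i j)) = 0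
        ↔ i = Fin.last d) := by
  have hud : uval d m d < 0 := by rw [uval_d d (by omega) m]; exact hneg
  constructor
  · rw [sum_pick, Fin.val_last]; exact hud
  · intro i hi0
    rw [sum_combo]
    by_cases hl : i = Fin.last d
    · subst hl
      have e1 : ((Fin.last d + 1 : Fin (d+1)) : ℕ) = 0 := by rw [Fin.val_add_one]; simp
      have e2 : ((Fin.last d - 1 : Fin (d+1)) : ℕ) = d - 1 := by
        rw [Fin.coe_sub_one]; simp [Fin.ext_iff]; omega
      rw [e1, e2, Fin.val_last]
      have hz := uval_last m (d-2)
      rw [show d-2+2 = d from by omega, show d-2+1 = d-1 from by omega] at hz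
      exact ⟨le_of_eq hz, by simp [hz]⟩
    · have hv0 : (i:ℕ) ≠ 0 := fun h => hi0 (Fin.ext (by rw [h]; simp))
      have hvl : (i:ℕ) ≠ d := by simpa [Fin.ext_iff] using hl
      have hlt := i.isLt
      have e1 : ((i+1 : Fin (d+1)) : ℕ) = (i:ℕ)+1 := by rw [Fin.val_add_one]; simp [hl]
      have e2 : ((i-1 : Fin (d+1)) : ℕ) = (i:ℕ)-1 := by rw [Fin.coe_sub_one]; simp [hi0]
      rw [e1, e2, Fin.val_last]
      have tele := uval_tele m ((i:ℕ)-1) (d-1-(i:ℕ))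
      rw [show (i:ℕ)-1+(d-1-(i:ℕ))+2 = d from by omega,
          show (i:ℕ)-1+2 = (i:ℕ)+1 from by omega,
          show (i:ℕ)-1+1 = (i:ℕ) from by omega] at tele
      have hlt2 := uval_lt m hm d hde hd hneg (i:ℕ) (by omega) (by omega)
      refine ⟨by linarith, ⟨fun h => ?_, fun h => absurd h hl⟩⟩
      exfalso; linarith
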